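/- Fully decentralized bound: Let f : 2^V → ℝ be a normalized, monotone, submodular set function with curvature κ_f ∈ [0,1). Suppose each agent i selects a_i satisfying f(a_i) ≥ f(a*_i) for its own action a*_i in an arbitrary comparison set A* = {a*_1,…,a*_n} (no coordination). Then f(A*) ≤ ∑_i f(a*_i) ≤ ∑_i f(a_i) ≤ (1/(1−κ_f)) f(A), i.e., f(A) ≥ (1−κ_f) f(A*), where A = {a_1,…,a_n}. -/

import Mathlib

/-- Fully decentralized bound: if each agent independently
selects `a_i` with `f({a_i}) ≥ f({a*_i})`, then
`f(A*) ≤ ∑_i f({a*_i}) ≤ ∑_i f({a_i}) ≤ (1/(1-κ)) f(A)`, i.e.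
`f(A) ≥ (1-κ) f(A*)`. -/
theorem fully_decentralized_bound
    {V : Type*} [Fintype V] [Nonempty V] [DecidableEq V]
    (f : Finset V → ℝ)
    (hnorm : f ∅ = 0)
    (hmono : ∀ {A B : Finset V}, A ⊆ B → f A ≤ f B)
    (hsub : ∀ {A B : Finset V} (s : V), A ⊆ B →
      f (insert s B) - f B ≤ f (insert s A) - f A)
    (hpos : ∀ v : V, 0 < f {v})
    (κ : ℝ)
    (hκ : κ = 1 - Finset.univ.inf' Finset.univ_nonempty
      (fun v : V => (f Finset.univ - f (Finset.univ.erase v)) / f {v}))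
    (hκlt : κ < 1)
    (n : ℕ) (a astar : Fin n → V)
    (hainj : Function.Injective a) (hastarinj : Function.Injective astar)
    -- no coordination: each agent maximizes its own singleton value
    (hsel : ∀ i : Fin n, f {astar i} ≤ f {a i}) :
    f (Finset.univ.image astar) ≤ ∑ i, f {astar i}
    ∧ ∑ i, f {astar i} ≤ ∑ i, f {a i}
    ∧ ∑ i, f {a i} ≤ (1 / (1 - κ)) * f (Finset.univ.image a)
    ∧ (1 - κ) * f (Finset.univ.image astar) ≤ f (Finset.univ.image a) := by
  have hpos1κ : 0 < 1 - κ := by linarith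
  -- subadditivity
  have subadd : ∀ S : Finset V, f S ≤ ∑ v ∈ S, f {v} := by
    intro S
    induction S using Finset.induction with
    | empty => simp [hnorm]
    | @insert v S hvS ih =>

      have h := hsub v (Finset.empty_subset S)
      simp only [hnorm, insert_empty_eq, sub_zero] at h
      rw [Finset.sum_insert hvS]
      linarith
  -- curvature lower bound
  have curv : ∀ S : Finset V, (1 - κ) * ∑ v ∈ S, f {v} ≤ f S := by
    intro S
    induction S using Finset.induction with
    | empty => simp [hnorm]
    | @insert v S hvS ih =>

      have hsubS : S ⊆ Finset.univ.erase v := by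
        intro x hx
        exact Finset.mem_erase.2 ⟨fun h => hvS (h ▸ hx), Finset.mem_univ x⟩
      have h := hsub v hsubS
      rw [Finset.insert_erase (Finset.mem_univ v)] at h
      have hinf : (1 - κ) ≤ (f Finset.univ - f (Finset.univ.erase v)) / f {v} := by
        rw [hκ]
        simp only [sub_sub_cancel]
        exact Finset.inf'_le _ (Finset.mem_univ v)
      have hmarg : (1 - κ) * f {v} ≤ f Finset.univ - f (Finset.univ.erase v) :=
        (le_div_iff₀ (hpos v)).mp hinf
      rw [Finset.sum_insert hvS, mul_add]
      linarith
  have hsumastar : ∑ v ∈ Finset.univ.image astar, f {v} = ∑ i, f {astar i} :=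
    Finset.sum_image (fun x _ y _ h => hastarinj h)
  have hsuma : ∑ v ∈ Finset.univ.image a, f {v} = ∑ i, f {a i} :=
    Finset.sum_image (fun x _ y _ h => hainj h)
  have h1 : f (Finset.univ.image astar) ≤ ∑ i, f {astar i} := by
    rw [← hsumastar]; exact subadd _
  have h2 : ∑ i, f {astar i} ≤ ∑ i, f {a i} :=
    Finset.sum_le_sum fun i _ => hsel i
  have h3' : (1 - κ) * ∑ i, f {a i} ≤ f (Finset.univ.image a) := by
    rw [← hsuma]; exact curv _
  refine ⟨h1, h2, ?_, ?_⟩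
  · rw [div_mul_eq_mul_div, le_div_iff₀ hpos1κ]
    linarith
  · calc (1 - κ) * f (Finset.univ.image astar)
        ≤ (1 - κ) * ∑ i, f {a i} := by
          apply mul_le_mul_of_nonneg_left (le_trans h1 h2) (le_of_lt hpos1κ)
      _ ≤ _ := h3'
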